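/- Let p be a prime, A a reduced commutative ring with p·1_A = 0, n ≥ 1, and let Σ denote either Σ_s (with p odd and 1 ≤ s ≤ (p−1)/2) or Σ_{1,t} (with t ≥ 1). Let m ≥ 1 and let X, X' ∈ Σ be such that X − X' lies entrywise in V^m. Then e₁(X) − e₁(X') and l₁(X) − l₁(X') lie entrywise in V^m, where e₁ and l₁ denote the V-adic limits of the exponential and logarithmic partial sums respectively. -/

import Mathlib

/-- The matrix of `j`-th Witt coordinates of a matrix of Witt vectors. -/
def wittPi (p : ℕ) {A : Type*} {n : ℕ} (j : ℕ)
    (X : Matrix (Fin n) (Fin n) (WittVector p A)) : Matrix (Fin n) (Fin n) A :=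
  X.map fun w => w.coeff j

/-- `Σ_s`: matrices of Witt vectors whose `0`-th Witt coordinate matrix is `s`-step nilpotent. -/
def SigmaS (p : ℕ) {A : Type*} [CommRing A] {n : ℕ} (s : ℕ) :
    Set (Matrix (Fin n) (Fin n) (WittVector p A)) :=
  {X | wittPi p 0 X ^ s = 0}

/-- `Σ_{1,t}`: matrices of Witt vectors whose `0`-th Witt coordinate matrix vanishes and whose
`1`-st Witt coordinate matrix is `t`-step nilpotent. -/
def SigmaOneT (p : ℕ) {A : Type*} [CommRing A] {n : ℕ} (t : ℕ) :
    Set (Matrix (Fin n) (Fin n) (WittVector p A)) :=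
  {X | wittPi p 0 X = 0 ∧ wittPi p 1 X ^ t = 0}

/-- The predicate "`S` is either `Σ_s` (with `p` odd and `1 ≤ s ≤ (p-1)/2`) or `Σ_{1,t}`
(with `t ≥ 1`)". -/
def IsSigmaEither (p : ℕ) {A : Type*} [CommRing A] {n : ℕ}
    (S : Set (Matrix (Fin n) (Fin n) (WittVector p A))) : Prop :=
  (∃ s : ℕ, Odd p ∧ 1 ≤ s ∧ s ≤ (p - 1) / 2 ∧ S = SigmaS p s) ∨
  (∃ t : ℕ, 1 ≤ t ∧ S = SigmaOneT p t)

/-- A matrix of Witt vectors lies entrywise in `V^d` if the `j`-th Witt coordinates of all its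
entries vanish for all `j < d`. -/
def EntrywiseV (p : ℕ) {A : Type*} [Zero A] {n : ℕ} (d : ℕ)
    (X : Matrix (Fin n) (Fin n) (WittVector p A)) : Prop :=
  ∀ j < d, wittPi p j X = 0

/-- V-adic convergence of a sequence of matrices of Witt vectors. -/
def TendstoV (p : ℕ) [Fact p.Prime] {A : Type*} [CommRing A] {n : ℕ}
    (Y : ℕ → Matrix (Fin n) (Fin n) (WittVector p A))
    (L : Matrix (Fin n) (Fin n) (WittVector p A)) : Prop :=
  ∀ d : ℕ, ∃ N₀ : ℕ, ∀ N ≥ N₀, EntrywiseV p d (Y N - L)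

/-- `E` is the sequence of exponential partial sums of `X`:
`N! • E N = ∑_{v=1}^{N} (N!/v!) • X^v` for all `N ≥ 1`. -/
def IsExpPartialSums (p : ℕ) [Fact p.Prime] {A : Type*} [CommRing A] {n : ℕ}
    (X : Matrix (Fin n) (Fin n) (WittVector p A))
    (E : ℕ → Matrix (Fin n) (Fin n) (WittVector p A)) : Prop :=
  ∀ N, 1 ≤ N → N.factorial • E N =
    ∑ v ∈ Finset.Icc 1 N, (N.factorial / v.factorial) • X ^ v

/-- `Lg` is the sequence of logarithmic partial sums of `X`:
`N! • Lg N = ∑_{v=1}^{N} (-1)^(v-1) • (N!/v) • X^v` for all `N ≥ 1`. -/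
def IsLogPartialSums (p : ℕ) [Fact p.Prime] {A : Type*} [CommRing A] {n : ℕ}
    (X : Matrix (Fin n) (Fin n) (WittVector p A))
    (Lg : ℕ → Matrix (Fin n) (Fin n) (WittVector p A)) : Prop :=
  ∀ N, 1 ≤ N → (N.factorial : ℤ) • Lg N =
    ∑ v ∈ Finset.Icc 1 N, ((-1 : ℤ) ^ (v - 1) * ((N.factorial / v : ℕ) : ℤ)) • X ^ v

/-- `L` is the V-adic limit of the exponential partial sums of `X`. -/
def IsExpLimit (p : ℕ) [Fact p.Prime] {A : Type*} [CommRing A] {n : ℕ}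
    (X L : Matrix (Fin n) (Fin n) (WittVector p A)) : Prop :=
  ∃ E : ℕ → Matrix (Fin n) (Fin n) (WittVector p A),
    IsExpPartialSums p X E ∧ TendstoV p E L

/-- `L` is the V-adic limit of the logarithmic partial sums of `X`. -/
def IsLogLimit (p : ℕ) [Fact p.Prime] {A : Type*} [CommRing A] {n : ℕ}
    (X L : Matrix (Fin n) (Fin n) (WittVector p A)) : Prop :=
  ∃ Lg : ℕ → Matrix (Fin n) (Fin n) (WittVector p A),
    IsLogPartialSums p X Lg ∧ TendstoV p Lg L


set_option linter.unusedSectionVars false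
set_option maxHeartbeats 1000000

namespace ExpLogCong

open WittVector

variable {p : ℕ} [hp : Fact p.Prime] {A : Type*} [CommRing A] [CharP A p] [IsReduced A]

local notation "𝕎" => WittVector p

lemma exists_verschiebung {x : 𝕎 A} (h : x.coeff 0 = 0) :
    ∃ y : 𝕎 A, verschiebung y = x := by
  refine ⟨WittVector.mk p fun j => x.coeff (j + 1), WittVector.ext fun n => ?_⟩
  cases n with
  | zero => rw [verschiebung_coeff_zero, h]
  | succ n => rw [verschiebung_coeff_succ, coeff_mk]

lemma mul_p_cancel {x y : 𝕎 A} (h : x * (p : 𝕎 A) = y * (p : 𝕎 A)) : x = y := by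
  have h0 : (x - y) * (p : 𝕎 A) = 0 := by rw [sub_mul, h, sub_self]
  have hxy : x - y = 0 := by
    apply WittVector.ext
    intro n
    have h1 : ((x - y) * (p : 𝕎 A)).coeff (n + 1) = (0 : 𝕎 A).coeff (n + 1) := by rw [h0]
    rw [WittVector.mul_charP_coeff_succ, WittVector.zero_coeff] at h1
    rw [WittVector.zero_coeff]
    exact IsNilpotent.eq_zero ⟨p, h1⟩
  exact sub_eq_zero.mp hxy

lemma mul_p_pow_cancel (k : ℕ) {x y : 𝕎 A} (h : x * (p : 𝕎 A) ^ k = y * (p : 𝕎 A) ^ k) :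
    x = y := by
  induction k with
  | zero => simpa using h
  | succ k ih =>
    rw [pow_succ, ← mul_assoc, ← mul_assoc] at h
    exact ih (mul_p_cancel h)

lemma nsmul_p_pow_cancel (k : ℕ) {x y : 𝕎 A} (h : (p ^ k : ℕ) • x = (p ^ k : ℕ) • y) :
    x = y := by
  apply mul_p_pow_cancel k
  have e : ∀ z : 𝕎 A, (p ^ k : ℕ) • z = z * (p : 𝕎 A) ^ k := by
    intro z
    rw [nsmul_eq_mul, mul_comm]
    push_cast
    ring
  rwa [e, e] at h

/-- The ideal of Witt vectors whose first `d` coefficients vanish. -/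
noncomputable def Idl (p : ℕ) (A : Type*) [hp : Fact p.Prime] [CommRing A] (d : ℕ) :
    Ideal (WittVector p A) :=
  RingHom.ker (WittVector.truncate d)

lemma mem_Idl {d : ℕ} {x : 𝕎 A} : x ∈ Idl p A d ↔ ∀ j < d, x.coeff j = 0 :=
  WittVector.mem_ker_truncate d x

lemma Idl_mono {d e : ℕ} (h : e ≤ d) : Idl p A d ≤ Idl p A e := by
  intro x hx
  rw [mem_Idl] at hx ⊢
  exact fun j hj => hx j (lt_of_lt_of_le hj h)

lemma versch_mem {d : ℕ} {x : 𝕎 A} (hx : x ∈ Idl p A d) :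
    verschiebung x ∈ Idl p A (d + 1) := by
  rw [mem_Idl] at hx ⊢
  intro j hj
  cases j with
  | zero => exact verschiebung_coeff_zero x
  | succ j => rw [verschiebung_coeff_succ]; exact hx j (by omega)

lemma exists_versch_mem {d : ℕ} (hd : 1 ≤ d) {x : 𝕎 A} (hx : x ∈ Idl p A d) :
    ∃ y ∈ Idl p A (d - 1), verschiebung y = x := by
  rw [mem_Idl] at hx
  refine ⟨WittVector.mk p fun j => x.coeff (j + 1), ?_, WittVector.ext fun n => ?_⟩
  · rw [mem_Idl]
    intro j hj
    rw [coeff_mk]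
    exact hx (j + 1) (by omega)
  · cases n with
    | zero => rw [verschiebung_coeff_zero, hx 0 (by omega)]
    | succ n => rw [verschiebung_coeff_succ, coeff_mk]

lemma mul_idl_p {d : ℕ} (hd : 1 ≤ d) {x y : 𝕎 A} (hx : x ∈ Idl p A 1) (hy : y ∈ Idl p A d) :
    ∃ z ∈ Idl p A d, x * y = z * (p : 𝕎 A) := by
  obtain ⟨a, rfl⟩ := exists_verschiebung (mem_Idl.mp hx 0 (by omega))
  obtain ⟨b, hb, rfl⟩ := exists_versch_mem hd hy
  refine ⟨verschiebung (a * b), ?_, ?_⟩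
  · have h2 := versch_mem (Ideal.mul_mem_left _ a hb)
    rwa [Nat.sub_add_cancel hd] at h2
  · calc verschiebung a * verschiebung b
        = verschiebung (a * frobenius (verschiebung b)) :=
          (verschiebung_mul_frobenius a (verschiebung b)).symm
      _ = verschiebung (a * b * (p : 𝕎 A)) := by rw [frobenius_verschiebung, mul_assoc]
      _ = verschiebung (frobenius (verschiebung (a * b))) := by rw [frobenius_verschiebung]
      _ = verschiebung (a * b) * (p : 𝕎 A) := verschiebung_frobenius _

/-- Elements of the form `z * p ^ k` with `z` in `Idl p A d`. -/
def Jset (p : ℕ) (A : Type*) [hp : Fact p.Prime] [CommRing A] (k d : ℕ) :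
    Set (WittVector p A) :=
  {x | ∃ z ∈ Idl p A d, x = z * (p : WittVector p A) ^ k}

lemma Jset_zero (k d : ℕ) : (0 : 𝕎 A) ∈ Jset p A k d :=
  ⟨0, Ideal.zero_mem _, by ring⟩

lemma Jset_add {k d : ℕ} {x y : 𝕎 A} (hx : x ∈ Jset p A k d) (hy : y ∈ Jset p A k d) :
    x + y ∈ Jset p A k d := by
  obtain ⟨z, hz, rfl⟩ := hx
  obtain ⟨w, hw, rfl⟩ := hy
  exact ⟨z + w, Ideal.add_mem _ hz hw, by ring⟩

lemma Jset_top (x : 𝕎 A) : x ∈ Jset p A 0 0 :=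
  ⟨x, mem_Idl.mpr fun j hj => absurd hj (Nat.not_lt_zero j), by ring⟩

lemma Idl_mem_Jset {d : ℕ} {x : 𝕎 A} (hx : x ∈ Idl p A d) : x ∈ Jset p A 0 d :=
  ⟨x, hx, by ring⟩

lemma Jset_mono {k k' d d' : ℕ} (hk : k' ≤ k) (hd : d' ≤ d) :
    Jset p A k d ⊆ Jset p A k' d' := by
  rintro x ⟨z, hz, rfl⟩
  refine ⟨z * (p : 𝕎 A) ^ (k - k'), Ideal.mul_mem_right _ _ (Idl_mono hd hz), ?_⟩
  rw [mul_assoc, ← pow_add]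
  congr 2
  omega

lemma Jset_mul {k d c e : ℕ} {x y : 𝕎 A} (hx : x ∈ Jset p A k d) (hy : y ∈ Jset p A c e) :
    x * y ∈ Jset p A (k + c) d := by
  obtain ⟨z, hz, rfl⟩ := hx
  obtain ⟨w, hw, rfl⟩ := hy
  exact ⟨z * w, Ideal.mul_mem_right _ _ hz, by rw [pow_add]; ring⟩

lemma Jset_mul_key {k c m : ℕ} (hm : 1 ≤ m) {x y : 𝕎 A}
    (hx : x ∈ Jset p A k m) (hy : y ∈ Jset p A c 1) :
    x * y ∈ Jset p A (k + c + 1) m := by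
  obtain ⟨z, hz, rfl⟩ := hx
  obtain ⟨w, hw, rfl⟩ := hy
  obtain ⟨u, hu, huv⟩ := mul_idl_p hm hw hz
  refine ⟨u, hu, ?_⟩
  calc z * (p : 𝕎 A) ^ k * (w * (p : 𝕎 A) ^ c)
      = w * z * (p : 𝕎 A) ^ (k + c) := by rw [pow_add]; ring
    _ = u * (p : 𝕎 A) ^ (k + c + 1) := by rw [huv, pow_succ]; ring

lemma Jset_sum {k d : ℕ} {ι : Type*} (s : Finset ι) (f : ι → 𝕎 A)
    (h : ∀ i ∈ s, f i ∈ Jset p A k d) : (∑ i ∈ s, f i) ∈ Jset p A k d := by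
  classical
  induction s using Finset.induction with
  | empty => simpa using Jset_zero k d
  | @insert _ _ hnot ih =>
    rw [Finset.sum_insert hnot]
    exact Jset_add (h _ (Finset.mem_insert_self _ _))
      (ih fun i hi => h i (Finset.mem_insert_of_mem hi))

lemma exists_iterate {j : ℕ} : ∀ {x : 𝕎 A}, (∀ i < j, x.coeff i = 0) →
    ∃ y : 𝕎 A, verschiebung^[j] y = x := by
  induction j with
  | zero => exact fun {x} _ => ⟨x, rfl⟩
  | succ j ih =>
    intro x h
    obtain ⟨z, rfl⟩ := exists_verschiebung (h 0 (Nat.succ_pos j))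
    obtain ⟨y, hy⟩ := ih (x := z) fun i hi => by
      have h2 := h (i + 1) (by omega)
      rwa [verschiebung_coeff_succ] at h2
    exact ⟨y, by rw [Function.iterate_succ_apply', hy]⟩

lemma iterate_versch_nsmul (j u : ℕ) (w : 𝕎 A) :
    verschiebung^[j] (u • w) = u • verschiebung^[j] w := by
  induction j with
  | zero => rfl
  | succ j ih =>
    rw [Function.iterate_succ_apply', Function.iterate_succ_apply', ih, map_nsmul]

lemma unit_cast {u : ℕ} (hu : ¬ p ∣ u) : IsUnit (u : A) := by
  have hz : (u : ZMod p) ≠ 0 := by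
    rw [Ne, ZMod.natCast_eq_zero_iff]
    exact hu
  have h1 : IsUnit (u : ZMod p) := hz.isUnit
  have h2 := h1.map (ZMod.castHom (dvd_refl p) A)
  rwa [map_natCast] at h2

lemma nsmul_coeff_cancel {u : ℕ} (hu : ¬ p ∣ u) {d : ℕ} {x : 𝕎 A}
    (h : ∀ j < d, (u • x).coeff j = 0) : ∀ j < d, x.coeff j = 0 := by
  intro j
  induction j using Nat.strong_induction_on with
  | _ j ih =>
    intro hj
    obtain ⟨y, hy⟩ := exists_iterate (j := j) (x := x) fun i hi => ih i hi (lt_trans hi hj)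
    have h1 : (u • x).coeff j = (u : A) * y.coeff 0 := by
      rw [← hy, ← iterate_versch_nsmul]
      have h2 := iterate_verschiebung_coeff (u • y) j 0
      rw [zero_add] at h2
      rw [h2]
      have h3 : (u • y).coeff 0 = WittVector.constantCoeff (u • y) := rfl
      rw [h3, map_nsmul, nsmul_eq_mul]
      rfl
    have h4 := h j hj
    rw [h1] at h4
    have h5 : y.coeff 0 = 0 := ((unit_cast (p := p) (A := A) hu).mul_right_eq_zero).mp h4
    rw [← hy]
    have h6 := iterate_verschiebung_coeff y j 0
    rw [zero_add] at h6
    rw [h6, h5]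

lemma num_ineq (s : ℕ) (hs : 1 ≤ s) (hsp : 2 * s ≤ p - 1 ∨ s = 1) (i j : ℕ) :
    (((i + j + 1).factorial).factorization p) ≤ i / s + j / s := by
  set v := i + j + 1 with hv
  have hp2 := hp.out.two_le
  have hleg : (p - 1) * padicValNat p (v.factorial) = v - (p.digits v).sum :=
    sub_one_mul_padicValNat_factorial v
  have hfac : (v.factorial).factorization p = padicValNat p (v.factorial) :=
    Nat.factorization_def _ hp.out
  set F := padicValNat p (v.factorial) with hF
  rw [hfac]
  have hvne : v ≠ 0 := by omega
  have hne : p.digits v ≠ [] := Nat.digits_ne_nil_iff_ne_zero.mpr hvne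
  have hlast := Nat.getLast_digit_ne_zero p hvne
  have hmem : (p.digits v).getLast hne ∈ p.digits v := List.getLast_mem hne
  have hdig : 1 ≤ (p.digits v).sum :=
    le_trans (Nat.one_le_iff_ne_zero.mpr hlast)
      (List.single_le_sum (fun _ _ => Nat.zero_le _) _ hmem)
  have hdd : (p.digits v).sum ≤ v := Nat.digit_sum_le p v
  have h1 : (p - 1) * F ≤ i + j := by rw [hleg]; omega
  rcases hsp with hsp | hsp
  · by_cases hF0 : F = 0
    · rw [hF0]; exact Nat.zero_le _
    · by_contra hcon
      push_neg at hcon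
      have hGoal : i / s + j / s + 1 ≤ F := hcon
      have di := Nat.div_add_mod i s
      have dj := Nat.div_add_mod j s
      have mi : i % s < s := Nat.mod_lt i (by omega)
      have mj : j % s < s := Nat.mod_lt j (by omega)
      have t2 : 2 * (s * F) ≤ (p - 1) * F := by
        calc 2 * (s * F) = (2 * s) * F := by ring
          _ ≤ (p - 1) * F := Nat.mul_le_mul_right F hsp
      have t1 : s * F + s ≤ 2 * (s * F) := by
        have hsF : s ≤ s * F := Nat.le_mul_of_pos_right s (by omega)
        omega
      have t3 : s * F + s ≤ i + j := le_trans (le_trans t1 t2) h1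
      have t4 : s * (i / s + j / s + 1) ≤ s * F := Nat.mul_le_mul_left s hGoal
      have t5 : s * (i / s + j / s + 1) = s * (i / s) + s * (j / s) + s := by ring
      have t6 : s * F + s ≤ s * (i / s) + s * (j / s) + (i % s) + (j % s) := by
        linarith [di, dj]
      linarith
  · subst hsp
    simp only [Nat.div_one]
    have h2 : F ≤ (p - 1) * F := Nat.le_mul_of_pos_left F (by omega)
    omega

lemma sub_pow_sum {R : Type*} [Ring R] (X X' : R) (v : ℕ) :
    X ^ v - X' ^ v = ∑ i ∈ Finset.range v, X' ^ i * (X - X') * X ^ (v - 1 - i) := by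
  induction v with
  | zero => simp
  | succ v ih =>
    rw [Finset.sum_range_succ']
    have e1 : ∀ i ∈ Finset.range v,
        X' ^ (i + 1) * (X - X') * X ^ (v + 1 - 1 - (i + 1))
          = X' * (X' ^ i * (X - X') * X ^ (v - 1 - i)) := by
      intro i hi
      rw [Finset.mem_range] at hi
      have hexp : v + 1 - 1 - (i + 1) = v - 1 - i := by omega
      rw [hexp, pow_succ', mul_assoc X' (X' ^ i) (X - X'),
        mul_assoc X' (X' ^ i * (X - X')) (X ^ (v - 1 - i))]
    rw [Finset.sum_congr rfl e1, ← Finset.mul_sum, ← ih]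
    simp only [pow_zero, one_mul, Nat.add_sub_cancel, Nat.sub_zero]
    rw [mul_sub, sub_mul, pow_succ' X v, pow_succ' X' v]
    abel

-- Matrix-level lemmas

lemma entrywise_iff {n d : ℕ} {M : Matrix (Fin n) (Fin n) (𝕎 A)} :
    EntrywiseV p d M ↔ ∀ a b, M a b ∈ Idl p A d := by
  constructor
  · intro h a b
    rw [mem_Idl]
    intro j hj
    have h2 := congrFun (congrFun (h j hj) a) b
    simpa [wittPi, Matrix.map_apply] using h2
  · intro h j hj
    ext a b
    simp only [wittPi, Matrix.map_apply, Matrix.zero_apply]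
    exact mem_Idl.mp (h a b) j hj

lemma matrix_ppow_cancel {n k : ℕ} {M N : Matrix (Fin n) (Fin n) (𝕎 A)}
    (h : (p ^ k : ℕ) • M = (p ^ k : ℕ) • N) : M = N := by
  refine Matrix.ext fun a b => ?_
  have h2 := congrFun (congrFun h a) b
  rw [Matrix.smul_apply, Matrix.smul_apply] at h2
  exact nsmul_p_pow_cancel k h2

lemma matrix_nsmul_idl_cancel {n u d : ℕ} (hu : ¬ p ∣ u) {M : Matrix (Fin n) (Fin n) (𝕎 A)}
    (h : ∀ a b, (u • M) a b ∈ Idl p A d) : ∀ a b, M a b ∈ Idl p A d := by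
  intro a b
  rw [mem_Idl]
  apply nsmul_coeff_cancel hu
  intro j hj
  have h2 := mem_Idl.mp (h a b) j hj
  rwa [Matrix.smul_apply] at h2

lemma pow_blocks {n s : ℕ} {Y : Matrix (Fin n) (Fin n) (𝕎 A)}
    (hY : ∀ a b, (Y ^ s) a b ∈ Idl p A 1) :
    ∀ q, 1 ≤ q → ∀ a b, ((Y ^ s) ^ q) a b ∈ Jset p A (q - 1) 1 := by
  intro q
  induction q with
  | zero => omega
  | succ q ih =>
    intro _
    rcases Nat.eq_zero_or_pos q with h0 | h0
    · subst h0
      intro a b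
      have h1 := Idl_mem_Jset (hY a b)
      simpa using h1
    · intro a b
      rw [pow_succ, Matrix.mul_apply]
      apply Jset_sum
      intro c _
      have h1 := ih h0 a c
      have h2 := Idl_mem_Jset (hY c b)
      have h3 := Jset_mul_key (le_refl 1) h1 h2
      have he : q - 1 + 0 + 1 = q + 1 - 1 := by omega
      rwa [he] at h3

lemma pow_entries {n s : ℕ} (hs : 1 ≤ s) {Y : Matrix (Fin n) (Fin n) (𝕎 A)}
    (hY : ∀ a b, (Y ^ s) a b ∈ Idl p A 1) (i : ℕ) (hi : 1 ≤ i / s) :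
    ∀ a b, (Y ^ i) a b ∈ Jset p A (i / s - 1) 1 := by
  intro a b
  have hdecomp : Y ^ i = (Y ^ s) ^ (i / s) * Y ^ (i % s) := by
    rw [← pow_mul, ← pow_add]
    congr 1
    exact (Nat.div_add_mod i s).symm
  rw [hdecomp, Matrix.mul_apply]
  apply Jset_sum
  intro c _
  have h1 := pow_blocks hY (i / s) hi a c
  have h2 := Jset_mul h1 (Jset_top ((Y ^ (i % s)) c b))
  simpa using h2

lemma pow_diff {n : ℕ} (X X' : Matrix (Fin n) (Fin n) (𝕎 A)) (s m : ℕ)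
    (hs : 1 ≤ s) (hsp : 2 * s ≤ p - 1 ∨ s = 1) (hm : 1 ≤ m)
    (hXs : ∀ a b, (X ^ s) a b ∈ Idl p A 1)
    (hX's : ∀ a b, (X' ^ s) a b ∈ Idl p A 1)
    (hD : ∀ a b, (X - X') a b ∈ Idl p A m) (v : ℕ) :
    ∃ W : Matrix (Fin n) (Fin n) (𝕎 A), EntrywiseV p m W ∧
      X ^ v - X' ^ v = ((p ^ ((v.factorial).factorization p) : ℕ)) • W := by
  set F := (v.factorial).factorization p with hF
  have hterm : ∀ i j, i + j + 1 = v → ∀ a b,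
      (X' ^ i * (X - X') * X ^ j) a b ∈ Jset p A F m := by
    intro i j hij a b
    have hnum : F ≤ i / s + j / s := by
      rw [hF, ← hij]
      exact num_ineq s hs hsp i j
    apply Jset_mono hnum (le_refl m)
    have hM1 : ∀ a c, (X' ^ i * (X - X')) a c ∈ Jset p A (i / s) m := by
      intro a c
      rw [Matrix.mul_apply]
      apply Jset_sum
      intro e _
      rcases Nat.eq_zero_or_pos (i / s) with h0 | h0
      · rw [h0]
        have h2 := Jset_mul (Idl_mem_Jset (hD e c)) (Jset_top ((X' ^ i) a e))
        rw [mul_comm] at h2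
        simpa using h2
      · have hXi := pow_entries hs hX's i h0 a e
        have h2 := Jset_mul_key hm (Idl_mem_Jset (hD e c)) hXi
        rw [mul_comm] at h2
        have he : 0 + (i / s - 1) + 1 = i / s := by omega
        rwa [he] at h2
    rw [Matrix.mul_apply]
    apply Jset_sum
    intro c _
    rcases Nat.eq_zero_or_pos (j / s) with h0 | h0
    · have h2 := Jset_mul (hM1 a c) (Jset_top ((X ^ j) c b))
      rw [h0]
      simpa using h2
    · have hXj := pow_entries hs hXs j h0 c b
      have h2 := Jset_mul_key hm (hM1 a c) hXj
      have he : i / s + (j / s - 1) + 1 = i / s + j / s := by omega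
      rwa [he] at h2
  have hmem : ∀ a b, (X ^ v - X' ^ v) a b ∈ Jset p A F m := by
    intro a b
    rw [sub_pow_sum, Matrix.sum_apply]
    apply Jset_sum
    intro i hi
    rw [Finset.mem_range] at hi
    exact hterm i (v - 1 - i) (by omega) a b
  choose Z hZ1 hZ2 using fun a b => hmem a b
  refine ⟨Matrix.of Z, ?_, ?_⟩
  · rw [entrywise_iff]
    intro a b
    exact hZ1 a b
  · refine Matrix.ext fun a b => ?_
    rw [Matrix.smul_apply, hZ2 a b, Matrix.of_apply, nsmul_eq_mul, Nat.cast_pow, mul_comm]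

end ExpLogCong

namespace ExpLogCong

lemma wittPi_zero_eq {p : ℕ} [hp : Fact p.Prime] {A : Type*} [CommRing A] {n : ℕ}
    (M : Matrix (Fin n) (Fin n) (WittVector p A)) :
    wittPi p 0 M = (RingHom.mapMatrix (WittVector.constantCoeff : WittVector p A →+* A)) M := by
  refine Matrix.ext fun a b => ?_
  simp [wittPi, Matrix.map_apply, RingHom.mapMatrix_apply]

end ExpLogCong

open ExpLogCong in
/-- Proposition B.2 (c), congruence part: if `X, X' ∈ Σ` and `X − X'` lies entrywise in `V^m`,
then `e₁(X) − e₁(X')` and `l₁(X) − l₁(X')` lie entrywise in `V^m`. -/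
theorem exp_log_congruence (p : ℕ) [Fact p.Prime] (A : Type*) [CommRing A]
    [CharP A p] [IsReduced A] (n : ℕ) (hn : 1 ≤ n)
    (S : Set (Matrix (Fin n) (Fin n) (WittVector p A))) (hS : IsSigmaEither p S)
    (m : ℕ) (hm : 1 ≤ m)
    (X X' : Matrix (Fin n) (Fin n) (WittVector p A)) (hX : X ∈ S) (hX' : X' ∈ S)
    (hXX' : EntrywiseV p m (X - X')) :
    (∀ Y Y', IsExpLimit p X Y → IsExpLimit p X' Y' → EntrywiseV p m (Y - Y')) ∧
    (∀ Y Y', IsLogLimit p X Y → IsLogLimit p X' Y' → EntrywiseV p m (Y - Y')) := by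
  classical
  have hp : Fact p.Prime := inferInstance
  obtain ⟨s, hs1, hsp, hmemS⟩ : ∃ s : ℕ, 1 ≤ s ∧ (2 * s ≤ p - 1 ∨ s = 1) ∧
      ∀ Z ∈ S, ∀ a b, (Z ^ s) a b ∈ Idl p A 1 := by
    rcases hS with ⟨s, hodd, hs1, hs2, rfl⟩ | ⟨t, ht, rfl⟩
    · refine ⟨s, hs1, Or.inl ?_, ?_⟩
      · obtain ⟨k, hk⟩ := hodd
        omega
      · intro Z hZ a b
        rw [mem_Idl]
        intro j hj
        have hj0 : j = 0 := by omega
        subst hj0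
        have hZ' : wittPi p 0 Z ^ s = 0 := hZ
        have h1 : wittPi p 0 (Z ^ s) = 0 := by
          rw [wittPi_zero_eq, map_pow, ← wittPi_zero_eq, hZ']
        have h2 := congrFun (congrFun h1 a) b
        simpa [wittPi, Matrix.map_apply] using h2
    · refine ⟨1, le_rfl, Or.inr rfl, ?_⟩
      intro Z hZ a b
      rw [mem_Idl]
      intro j hj
      have hj0 : j = 0 := by omega
      subst hj0
      have hZ' : wittPi p 0 Z = 0 := hZ.1
      have h1 : wittPi p 0 (Z ^ 1) = 0 := by rw [pow_one, hZ']
      have h2 := congrFun (congrFun h1 a) b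
      simpa [wittPi, Matrix.map_apply] using h2
  have hXs := hmemS X hX
  have hX's := hmemS X' hX'
  have hD : ∀ a b, (X - X') a b ∈ Idl p A m := entrywise_iff.mp hXX'
  -- the key divisibility of X^v - X'^v
  have hPD := pow_diff X X' s m hs1 hsp hm hXs hX's hD
  constructor
  · -- exponential part
    have hEdiff : ∀ (E E' : ℕ → Matrix (Fin n) (Fin n) (WittVector p A)),
        IsExpPartialSums p X E → IsExpPartialSums p X' E' →
        ∀ N, 1 ≤ N → ∀ a b, (E N - E' N) a b ∈ Idl p A m := by
      intro E E' hE hE' N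
      induction N with
      | zero => omega
      | succ N ih =>
        intro _
        rcases Nat.eq_zero_or_pos N with h0 | h0
        · subst h0
          have e1 : E 1 = X := by
            have h1 := hE 1 le_rfl
            simpa using h1
          have e1' : E' 1 = X' := by
            have h1 := hE' 1 le_rfl
            simpa using h1
          rw [e1, e1']
          exact hD
        · -- inductive step
          have hmulE : ∀ (X₀ E₀ : Matrix (Fin n) (Fin n) (WittVector p A)),
              (N.factorial • E₀ = ∑ v ∈ Finset.Icc 1 N, (N.factorial / v.factorial) • X₀ ^ v) →
              (N + 1).factorial • E₀
                = ∑ v ∈ Finset.Icc 1 N, ((N + 1).factorial / v.factorial) • X₀ ^ v := by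
            intro X₀ E₀ h₀
            rw [Nat.factorial_succ, mul_smul, h₀, Finset.smul_sum]
            apply Finset.sum_congr rfl
            intro v hv
            rw [Finset.mem_Icc] at hv
            rw [smul_smul]
            congr 1
            rw [Nat.mul_div_assoc _ (Nat.factorial_dvd_factorial hv.2)]
          have hsplit : ∀ X₀ : Matrix (Fin n) (Fin n) (WittVector p A),
              (∑ v ∈ Finset.Icc 1 (N + 1), ((N + 1).factorial / v.factorial) • X₀ ^ v)
                = (∑ v ∈ Finset.Icc 1 N, ((N + 1).factorial / v.factorial) • X₀ ^ v)
                  + X₀ ^ (N + 1) := by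
            intro X₀
            rw [Finset.sum_Icc_succ_top (by omega)]
            congr 1
            rw [Nat.div_self (Nat.factorial_pos (N + 1)), one_smul]
          have hstep : ((N + 1).factorial : ℕ) • ((E (N + 1) - E' (N + 1)) - (E N - E' N))
              = X ^ (N + 1) - X' ^ (N + 1) := by
            have hE1 := hE (N + 1) (by omega)
            have hE1' := hE' (N + 1) (by omega)
            have hA1 := hmulE X (E N) (hE N h0)
            have hA2 := hmulE X' (E' N) (hE' N h0)
            have lhs : ((N + 1).factorial : ℕ) • ((E (N + 1) - E' (N + 1)) - (E N - E' N))
                = ((N + 1).factorial • E (N + 1) - (N + 1).factorial • E' (N + 1))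
                  - ((N + 1).factorial • E N - (N + 1).factorial • E' N) := by
              rw [smul_sub, smul_sub, smul_sub]
            rw [lhs, hE1, hE1', hA1, hA2, hsplit X, hsplit X']
            abel
          obtain ⟨W, hW, hWeq⟩ := hPD (N + 1)
          set F := ((N + 1).factorial).factorization p with hF
          set u := (N + 1).factorial / p ^ F with hu
          have hfac : p ^ F * u = (N + 1).factorial :=
            Nat.ordProj_mul_ordCompl_eq_self _ p
          have hune : ¬ p ∣ u := Nat.not_dvd_ordCompl hp.out (Nat.factorial_ne_zero _)
          have h2 : (p ^ F : ℕ) • (u • ((E (N + 1) - E' (N + 1)) - (E N - E' N)))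
              = (p ^ F : ℕ) • W := by
            rw [← mul_smul, hfac, hstep, hWeq]
          have h3 := matrix_ppow_cancel h2
          have h4 : ∀ a b, (u • ((E (N + 1) - E' (N + 1)) - (E N - E' N))) a b ∈ Idl p A m := by
            rw [h3]
            exact entrywise_iff.mp hW
          have h5 := matrix_nsmul_idl_cancel hune h4
          intro a b
          have hsplit2 : (E (N + 1) - E' (N + 1)) a b
              = (((E (N + 1) - E' (N + 1)) - (E N - E' N)) a b) + ((E N - E' N) a b) := by
            simp [Matrix.sub_apply]
          rw [hsplit2]
          exact Ideal.add_mem _ (h5 a b) (ih h0 a b)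
    rintro Y Y' ⟨E, hE, hT⟩ ⟨E', hE', hT'⟩
    obtain ⟨N₀, hN₀⟩ := hT m
    obtain ⟨N₀', hN₀'⟩ := hT' m
    set N := max 1 (max N₀ N₀') with hN
    have hENY := entrywise_iff.mp (hN₀ N (le_trans (le_max_left _ _) (le_max_right 1 _)))
    have hENY' := entrywise_iff.mp (hN₀' N (le_trans (le_max_right _ _) (le_max_right 1 _)))
    have hEE' := hEdiff E E' hE hE' N (le_max_left 1 _)
    rw [entrywise_iff]
    intro a b
    have hYY' : (Y - Y') a b
        = ((E N - E' N) a b) - ((E N - Y) a b) + ((E' N - Y') a b) := by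
      simp only [Matrix.sub_apply]
      ring
    rw [hYY']
    exact Ideal.add_mem _ (Ideal.sub_mem _ (hEE' a b) (hENY a b)) (hENY' a b)
  · -- logarithmic part
    have hLdiff : ∀ (L L' : ℕ → Matrix (Fin n) (Fin n) (WittVector p A)),
        IsLogPartialSums p X L → IsLogPartialSums p X' L' →
        ∀ N, 1 ≤ N → ∀ a b, (L N - L' N) a b ∈ Idl p A m := by
      intro L L' hL hL' N
      induction N with
      | zero => omega
      | succ N ih =>
        intro _
        rcases Nat.eq_zero_or_pos N with h0 | h0
        · subst h0
          have e1 : L 1 = X := by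
            have h1 := hL 1 le_rfl
            simpa using h1
          have e1' : L' 1 = X' := by
            have h1 := hL' 1 le_rfl
            simpa using h1
          rw [e1, e1']
          exact hD
        · have hmulL : ∀ (X₀ L₀ : Matrix (Fin n) (Fin n) (WittVector p A)),
              ((N.factorial : ℤ) • L₀ = ∑ v ∈ Finset.Icc 1 N,
                ((-1 : ℤ) ^ (v - 1) * ((N.factorial / v : ℕ) : ℤ)) • X₀ ^ v) →
              ((N + 1).factorial : ℤ) • L₀ = ∑ v ∈ Finset.Icc 1 N,
                ((-1 : ℤ) ^ (v - 1) * (((N + 1).factorial / v : ℕ) : ℤ)) • X₀ ^ v := by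
            intro X₀ L₀ h₀
            have hcast : ((N + 1).factorial : ℤ) = (N + 1 : ℤ) * (N.factorial : ℤ) := by
              rw [Nat.factorial_succ]
              push_cast
              ring
            rw [hcast, mul_smul, h₀, Finset.smul_sum]
            apply Finset.sum_congr rfl
            intro v hv
            rw [Finset.mem_Icc] at hv
            rw [smul_smul]
            congr 1
            have hdvd : v ∣ N.factorial := Nat.dvd_factorial hv.1 hv.2
            have harith : ((N + 1).factorial / v : ℕ) = (N + 1) * (N.factorial / v) := by
              rw [Nat.factorial_succ, Nat.mul_div_assoc _ hdvd]
            rw [harith]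
            push_cast
            ring
          have hsplitL : ∀ X₀ : Matrix (Fin n) (Fin n) (WittVector p A),
              (∑ v ∈ Finset.Icc 1 (N + 1),
                  ((-1 : ℤ) ^ (v - 1) * (((N + 1).factorial / v : ℕ) : ℤ)) • X₀ ^ v)
                = (∑ v ∈ Finset.Icc 1 N,
                    ((-1 : ℤ) ^ (v - 1) * (((N + 1).factorial / v : ℕ) : ℤ)) • X₀ ^ v)
                  + ((-1 : ℤ) ^ N * (N.factorial : ℤ)) • X₀ ^ (N + 1) := by
            intro X₀
            have h1 : (N + 1).factorial / (N + 1) = N.factorial := by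
              rw [Nat.factorial_succ, Nat.mul_div_cancel_left _ (by omega)]
            have hsc : ((-1 : ℤ) ^ (N + 1 - 1) * (((N + 1).factorial / (N + 1) : ℕ) : ℤ))
                = (-1 : ℤ) ^ N * (N.factorial : ℤ) := by
              rw [h1, Nat.add_sub_cancel]
            rw [Finset.sum_Icc_succ_top (by omega), hsc]
          have hstep : ((N + 1).factorial : ℤ) • ((L (N + 1) - L' (N + 1)) - (L N - L' N))
              = ((-1 : ℤ) ^ N * (N.factorial : ℤ)) • (X ^ (N + 1) - X' ^ (N + 1)) := by
            have hL1 := hL (N + 1) (by omega)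
            have hL1' := hL' (N + 1) (by omega)
            have hA1 := hmulL X (L N) (hL N h0)
            have hA2 := hmulL X' (L' N) (hL' N h0)
            have lhs : ((N + 1).factorial : ℤ) • ((L (N + 1) - L' (N + 1)) - (L N - L' N))
                = (((N + 1).factorial : ℤ) • L (N + 1) - ((N + 1).factorial : ℤ) • L' (N + 1))
                  - (((N + 1).factorial : ℤ) • L N - ((N + 1).factorial : ℤ) • L' N) := by
              rw [smul_sub, smul_sub, smul_sub]
            rw [lhs, hL1, hL1', hA1, hA2, hsplitL X, hsplitL X', smul_sub]
            abel
          obtain ⟨W, hW, hWeq⟩ := hPD (N + 1)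
          set F := ((N + 1).factorial).factorization p with hF
          set u := (N + 1).factorial / p ^ F with hu
          have hfac : p ^ F * u = (N + 1).factorial :=
            Nat.ordProj_mul_ordCompl_eq_self _ p
          have hune : ¬ p ∣ u := Nat.not_dvd_ordCompl hp.out (Nat.factorial_ne_zero _)
          have h2 : (p ^ F : ℕ) • (u • ((L (N + 1) - L' (N + 1)) - (L N - L' N)))
              = (p ^ F : ℕ) • (((-1 : ℤ) ^ N * (N.factorial : ℤ)) • W) := by
            have hcast : ((N + 1).factorial : ℤ) • ((L (N + 1) - L' (N + 1)) - (L N - L' N))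
                = (p ^ F : ℕ) • (u • ((L (N + 1) - L' (N + 1)) - (L N - L' N))) := by
              rw [← mul_smul, hfac]
              rw [← natCast_zsmul]
            have hrhs : ((-1 : ℤ) ^ N * (N.factorial : ℤ)) • (X ^ (N + 1) - X' ^ (N + 1))
                = (p ^ F : ℕ) • (((-1 : ℤ) ^ N * (N.factorial : ℤ)) • W) := by
              rw [hWeq, smul_comm]
            rw [← hcast, hstep, hrhs]
          have h3 := matrix_ppow_cancel h2
          have h4 : ∀ a b, (u • ((L (N + 1) - L' (N + 1)) - (L N - L' N))) a b ∈ Idl p A m := by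
            rw [h3]
            intro a b
            rw [Matrix.smul_apply, zsmul_eq_mul]
            exact Ideal.mul_mem_left _ _ (entrywise_iff.mp hW a b)
          have h5 := matrix_nsmul_idl_cancel hune h4
          intro a b
          have hsplit2 : (L (N + 1) - L' (N + 1)) a b
              = (((L (N + 1) - L' (N + 1)) - (L N - L' N)) a b) + ((L N - L' N) a b) := by
            simp [Matrix.sub_apply]
          rw [hsplit2]
          exact Ideal.add_mem _ (h5 a b) (ih h0 a b)
    rintro Y Y' ⟨L, hL, hT⟩ ⟨L', hL', hT'⟩
    obtain ⟨N₀, hN₀⟩ := hT m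
    obtain ⟨N₀', hN₀'⟩ := hT' m
    set N := max 1 (max N₀ N₀') with hN
    have hENY := entrywise_iff.mp (hN₀ N (le_trans (le_max_left _ _) (le_max_right 1 _)))
    have hENY' := entrywise_iff.mp (hN₀' N (le_trans (le_max_right _ _) (le_max_right 1 _)))
    have hEE' := hLdiff L L' hL hL' N (le_max_left 1 _)
    rw [entrywise_iff]
    intro a b
    have hYY' : (Y - Y') a b
        = ((L N - L' N) a b) - ((L N - Y) a b) + ((L' N - Y') a b) := by
      simp only [Matrix.sub_apply]
      ring
    rw [hYY']
    exact Ideal.add_mem _ (Ideal.sub_mem _ (hEE' a b) (hENY a b)) (hENY' a b)
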